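/- Let $p \ge 5$ be a prime, let $a, b \in \mathrm{GF}(p)$ with $a \ne 0$, and suppose $f(X) = X^3 + aX + b$ is irreducible over $\mathrm{GF}(p)$. Then $g(X) = X^3 + aX - b$ is also irreducible over $\mathrm{GF}(p)$, and if $X^p \equiv c_2 X^2 + c_1 X + c_0 \pmod{f(X)}$ and $X^p \equiv c_2' X^2 + c_1' X + c_0' \pmod{g(X)}$, then $c_2' = -c_2$, $c_1' = c_1$, and $c_0' = -c_0$; in particular $3a \cdot (c_2')^{-1} = -\left(3a \cdot c_2^{-1}\right)$, so the square roots of the discriminant produced by the two polynomials are negatives of each other. -/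

import Mathlib

open Polynomial

private lemma comp_negX {R : Type*} [CommRing R] (q : R[X]) :
    q.comp (-X) = aeval (-X : R[X]) q := by
  simp [aeval_def, comp, eval₂_def]

/-- If `f = X³ + aX + b` is irreducible over `GF(p)` (`p ≥ 5` prime, `a ≠ 0`),
then so is `g = X³ + aX - b`, and if `X^p ≡ c₂X² + c₁X + c₀ (mod f)` and
`X^p ≡ c₂'X² + c₁'X + c₀' (mod g)`, then `c₂' = -c₂`, `c₁' = c₁`, `c₀' = -c₀`,
and `3a·(c₂')⁻¹ = -(3a·c₂⁻¹)`. -/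
theorem gfp3_sqrt_neg_b (p : ℕ) (hp : p.Prime) (hp5 : 5 ≤ p)
    (a b : ZMod p) (ha : a ≠ 0)
    (f g : (ZMod p)[X])
    (hf : f = X ^ 3 + C a * X + C b) (hg : g = X ^ 3 + C a * X - C b)
    (hirr : Irreducible f)
    (c₀ c₁ c₂ c₀' c₁' c₂' : ZMod p)
    (hremf : (X : (ZMod p)[X]) ^ p %ₘ f = C c₂ * X ^ 2 + C c₁ * X + C c₀)
    (hremg : (X : (ZMod p)[X]) ^ p %ₘ g = C c₂' * X ^ 2 + C c₁' * X + C c₀') :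
    Irreducible g ∧ c₂' = -c₂ ∧ c₁' = c₁ ∧ c₀' = -c₀ ∧
      3 * a * (c₂')⁻¹ = -(3 * a * c₂⁻¹) := by
  haveI := Fact.mk hp
  have hodd : Odd p := hp.odd_of_ne_two (by omega)
  -- the substitution X ↦ -X as an algebra automorphism
  let e : (ZMod p)[X] ≃ₐ[ZMod p] (ZMod p)[X] :=
    AlgEquiv.ofAlgHom (aeval (-X)) (aeval (-X))
      (by ext; simp) (by ext; simp)
  have he : ∀ q : (ZMod p)[X], e q = q.comp (-X) := fun q => (comp_negX q).symm
  have hfg : f.comp (-X) = -g := by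
    rw [hf, hg]; ring_nf; simp [comp]; ring
  -- irreducibility of g
  have hirr_comp : Irreducible (f.comp (-X)) := by
    rw [← he]
    exact (MulEquiv.irreducible_iff (e : (ZMod p)[X] ≃* (ZMod p)[X])).mpr hirr
  have hirrg : Irreducible g := by
    have h1 : Irreducible (-g) := hfg ▸ hirr_comp
    exact ((Associated.refl g).neg_left).irreducible h1
  -- monicity and degrees
  have hlin : degree (C a * X - C b) ≤ 1 := by
    rw [sub_eq_add_neg, ← C_neg]; exact degree_linear_le
  have hgdeglt : degree (C a * X - C b) < degree ((X : (ZMod p)[X]) ^ 3) := by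
    rw [degree_X_pow]
    exact lt_of_le_of_lt hlin (by norm_num)
  have hgm : g.Monic := by
    rw [hg, add_sub_assoc]
    exact monic_X_pow_add (lt_of_le_of_lt hlin (by norm_num))
  have hfm : f.Monic := by
    rw [hf, add_assoc]
    refine monic_X_pow_add (lt_of_le_of_lt degree_linear_le ?_)
    exact_mod_cast (by norm_num : (1 : ℕ) < 3)
  have hgdeg : g.degree = 3 := by
    rw [hg, add_sub_assoc,
      degree_add_eq_left_of_degree_lt (by simpa using hgdeglt), degree_X_pow]
    norm_cast
  -- transport the division identity for f through e
  have hdiv : (X : (ZMod p)[X]) ^ p %ₘ f + f * ((X : (ZMod p)[X]) ^ p /ₘ f) = X ^ p :=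
    modByMonic_add_div _ f
  have hXp : ((X : (ZMod p)[X]) ^ p).comp (-X) = -(X ^ p) := by
    simp [comp, hodd.neg_pow]
  have hrcomp : (C c₂ * X ^ 2 + C c₁ * X + C c₀).comp (-X) =
      C c₂ * X ^ 2 - C c₁ * X + C c₀ := by
    simp [comp]; ring
  have key : (X : (ZMod p)[X]) ^ p =
      C (-c₂) * X ^ 2 + C c₁ * X + C (-c₀) +
        g * (((X : (ZMod p)[X]) ^ p /ₘ f).comp (-X)) := by
    have h := congrArg (fun q => q.comp (-X)) hdiv
    rw [add_comp, mul_comp, hremf, hrcomp, hXp, hfg] at h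
    simp only [C_neg]
    linear_combination h
  have hmod : (X : (ZMod p)[X]) ^ p %ₘ g = C (-c₂) * X ^ 2 + C c₁ * X + C (-c₀) := by
    have h1 : (X : (ZMod p)[X]) ^ p %ₘ g + g * ((X : (ZMod p)[X]) ^ p /ₘ g) = X ^ p :=
      modByMonic_add_div _ g
    have hdeg1 : degree ((X : (ZMod p)[X]) ^ p %ₘ g) < 3 := hgdeg ▸ degree_modByMonic_lt _ hgm
    have hdeg2 : degree (C (-c₂) * X ^ 2 + C c₁ * X + C (-c₀)) < 3 :=
      lt_of_le_of_lt degree_quadratic_le (by norm_num)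
    have hdvd : g ∣ ((X : (ZMod p)[X]) ^ p %ₘ g - (C (-c₂) * X ^ 2 + C c₁ * X + C (-c₀))) := by
      refine ⟨((X : (ZMod p)[X]) ^ p /ₘ f).comp (-X) - ((X : (ZMod p)[X]) ^ p /ₘ g), ?_⟩
      linear_combination h1 + key
    have := eq_zero_of_dvd_of_degree_lt hdvd
      (lt_of_lt_of_le (lt_of_le_of_lt (degree_sub_le _ _) (max_lt hdeg1 hdeg2)) hgdeg.ge)
    exact sub_eq_zero.mp this
  have heq : C c₂' * X ^ 2 + C c₁' * X + C c₀' =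
      C (-c₂) * X ^ 2 + C c₁ * X + C (-c₀) := hremg ▸ hmod
  have h2 : c₂' = -c₂ := by
    have := congrArg (fun q : (ZMod p)[X] => q.coeff 2) heq
    simpa [coeff_add, coeff_C_mul, coeff_X_pow, coeff_X, coeff_C] using this
  have h1 : c₁' = c₁ := by
    have := congrArg (fun q : (ZMod p)[X] => q.coeff 1) heq
    simpa [coeff_add, coeff_C_mul, coeff_X_pow, coeff_X, coeff_C] using this
  have h0 : c₀' = -c₀ := by
    have := congrArg (fun q : (ZMod p)[X] => q.coeff 0) heq
    simpa [coeff_add, coeff_C_mul, coeff_X_pow, coeff_X, coeff_C] using this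
  exact ⟨hirrg, h2, h1, h0, by rw [h2, inv_neg]; ring⟩
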